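/- Let H be a separable Hilbert space, F a closed subspace with orthogonal projection P, and μ* a Borel probability measure on H with finite first moment. Then the pushforward measure P_#μ* minimizes the 1-Wasserstein distance W(μ, μ*) over all Borel probability measures μ supported on F (with finite first moment). -/

import Mathlib

open MeasureTheory ENNReal

/-- The 1-Wasserstein distance (as an `ℝ≥0∞`-valued infimum over couplings) between
two Borel measures on a normed space. -/
noncomputable def wasserstein1 {H : Type*} [NormedAddCommGroup H] [MeasurableSpace H]
    (μ ν : Measure H) : ℝ≥0∞ :=
  ⨅ (γ : Measure (H × H)) (_ : γ.map Prod.fst = μ) (_ : γ.map Prod.snd = ν),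
    ∫⁻ p, ‖p.1 - p.2‖₊ ∂γ

theorem pushforward_projection_minimizes_wasserstein
    {H : Type*} [NormedAddCommGroup H] [InnerProductSpace ℝ H]
    [MeasurableSpace H] [BorelSpace H] [SecondCountableTopology H]
    (F : Submodule ℝ H) [CompleteSpace F]
    (μstar : Measure H) [IsProbabilityMeasure μstar]
    (hmom : ∫⁻ u, ‖u‖₊ ∂μstar ≠ ⊤)
    (μ : Measure H) [IsProbabilityMeasure μ]
    (hsupp : μ (F : Set H) = 1)
    (hμmom : ∫⁻ u, ‖u‖₊ ∂μ ≠ ⊤) :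
    wasserstein1 (μstar.map (fun u => (F.orthogonalProjection u : H))) μstar ≤
      wasserstein1 μ μstar := by
  set P : H → H := fun u => (F.orthogonalProjection u : H) with hP
  have hPcont : Continuous P := (F.subtypeL.comp F.orthogonalProjection).continuous
  have hPm : Measurable P := hPcont.measurable
  have hpairm : Measurable (fun y : H => (P y, y)) := hPm.prodMk measurable_id
  have hnormm : Measurable (fun p : H × H => (‖p.1 - p.2‖₊ : ℝ≥0∞)) :=
    (measurable_fst.sub measurable_snd).nnnorm.coe_nnreal_ennreal
  refine le_iInf fun γ => le_iInf fun h1 => le_iInf fun h2 => ?_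
  -- upper bound via the coupling (P y, y)
  have hub : wasserstein1 (μstar.map P) μstar ≤ ∫⁻ y, ‖P y - y‖₊ ∂μstar := by
    have e1 : (μstar.map (fun y : H => (P y, y))).map Prod.fst = μstar.map P := by
      rw [Measure.map_map measurable_fst hpairm]; rfl
    have e2 : (μstar.map (fun y : H => (P y, y))).map Prod.snd = μstar := by
      rw [Measure.map_map measurable_snd hpairm]
      have : (Prod.snd ∘ fun y : H => (P y, y)) = id := rfl
      rw [this, Measure.map_id]
    calc wasserstein1 (μstar.map P) μstar
        ≤ ∫⁻ p, ‖p.1 - p.2‖₊ ∂(μstar.map (fun y : H => (P y, y))) := by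
          refine le_trans (iInf_le _ (μstar.map (fun y : H => (P y, y)))) ?_
          exact le_trans (iInf_le _ e1) (iInf_le _ e2)
      _ = ∫⁻ y, ‖P y - y‖₊ ∂μstar := lintegral_map hnormm hpairm
  refine hub.trans ?_
  have hf : Measurable (fun y : H => (‖P y - y‖₊ : ℝ≥0∞)) :=
    (hPm.sub measurable_id).nnnorm.coe_nnreal_ennreal
  have e3 : ∫⁻ y, ‖P y - y‖₊ ∂μstar = ∫⁻ p : H × H, ‖P p.2 - p.2‖₊ ∂γ := by
    rw [← h2, lintegral_map hf measurable_snd]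
  rw [e3]
  -- γ-a.e., the first coordinate lies in F
  have hFclosed : IsClosed (F : Set H) :=
    (completeSpace_coe_iff_isComplete.mp (by infer_instance)).isClosed
  have hFmeas : MeasurableSet (F : Set H) := hFclosed.measurableSet
  have hγprob : IsProbabilityMeasure γ := by
    constructor
    have := Measure.map_apply (μ := γ) measurable_fst MeasurableSet.univ
    rw [h1] at this
    simpa using this.symm
  have hone : γ (Prod.fst ⁻¹' (F : Set H)) = 1 := by
    have := Measure.map_apply (μ := γ) measurable_fst hFmeas
    rw [h1] at this
    rw [← this, hsupp]
  have hae : ∀ᵐ p : H × H ∂γ, p.1 ∈ (F : Set H) := by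
    rw [ae_iff]
    have : {p : H × H | ¬ p.1 ∈ (F : Set H)} = (Prod.fst ⁻¹' (F : Set H))ᶜ := rfl
    rw [this, measure_compl (measurable_fst hFmeas) (measure_ne_top _ _), measure_univ, hone,
      tsub_self]
  refine lintegral_mono_ae (hae.mono fun p hp => ?_)
  have key : ‖P p.2 - p.2‖ ≤ ‖p.1 - p.2‖ := by
    rw [norm_sub_rev, show P p.2 = F.starProjection p.2 from rfl, Submodule.starProjection_minimal]
    refine (ciInf_le ⟨0, fun x hx => ?_⟩ (⟨p.1, hp⟩ : F)).trans ?_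
    · rcases hx with ⟨v, rfl⟩; positivity
    · rw [norm_sub_rev]
  exact_mod_cast ENNReal.coe_le_coe.2 (by exact_mod_cast key)
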